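/- Let f : [0,∞) → ℝ satisfy f(0) = 0, let f be right-continuous, and suppose that at every t > 0 the left limit f(t−) exists and f(t−) ≤ f(t) (no negative jumps). Let y ≥ 0 and suppose the set {t ≥ 0 : f(t) ≤ −y} is nonempty, and put T(y) := inf{t ≥ 0 : f(t) ≤ −y}. Then f(T(y)) = −y; that is, the first passage of f below level −y occurs by hitting the level exactly. -/
import Mathlib


open Filter Set

/-- let `f : [0,∞) → ℝ` with `f(0) = 0` be right-continuous, with left
limits existing at every `t > 0` and `f(t−) ≤ f(t)` (no negative jumps). Let `y ≥ 0`,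
suppose `{t ≥ 0 : f(t) ≤ −y}` is nonempty, and put `T(y) := inf{t ≥ 0 : f(t) ≤ −y}`.
Then `f(T(y)) = −y`: the first passage below level `−y` occurs by hitting the level. -/
theorem first_passage_hits_level
    (f : ℝ → ℝ) (hf0 : f 0 = 0)
    (hrc : ∀ t : ℝ, 0 ≤ t → Tendsto f (nhdsWithin t (Set.Ioi t)) (nhds (f t)))
    (hll : ∀ t : ℝ, 0 < t →
        ∃ l : ℝ, Tendsto f (nhdsWithin t (Set.Iio t)) (nhds l) ∧ l ≤ f t)
    (y : ℝ) (hy : 0 ≤ y)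
    (hne : {t : ℝ | 0 ≤ t ∧ f t ≤ -y}.Nonempty) :
    f (sInf {t : ℝ | 0 ≤ t ∧ f t ≤ -y}) = -y := by
  set S := {t : ℝ | 0 ≤ t ∧ f t ≤ -y} with hS
  set T := sInf S with hT
  have hT0 : 0 ≤ T := le_csInf hne fun t ht => ht.1
  have hfT_le : f T ≤ -y := by
    by_cases hmem : T ∈ S
    · exact hmem.2
    · have hfreq : ∃ᶠ t in nhdsWithin T (Set.Ioi T), f t ∈ Set.Iic (-y) := by
        rw [Filter.frequently_iff]
        intro U hU
        obtain ⟨ε, hε, hsub⟩ := Metric.mem_nhdsWithin_iff.mp hU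
        obtain ⟨s, hsS, hs⟩ := Real.lt_sInf_add_pos hne hε
        have hTs : T ≤ s := csInf_le ⟨0, fun t ht => ht.1⟩ hsS
        have hlt : T < s := lt_of_le_of_ne hTs (fun h => hmem (h ▸ hsS))
        refine ⟨s, hsub ⟨?_, hlt⟩, hsS.2⟩
        rw [Metric.mem_ball, Real.dist_eq, abs_of_nonneg (by linarith)]
        linarith
      exact isClosed_Iic.mem_of_frequently_of_tendsto hfreq (hrc T hT0)
  have hfT_ge : -y ≤ f T := by
    rcases hT0.eq_or_lt with h0 | hpos
    · rw [← h0, hf0]; linarith [h0 ▸ hfT_le]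
    · obtain ⟨l, hl, hlf⟩ := hll T hpos
      have hev : ∀ᶠ t in nhdsWithin T (Set.Iio T), -y ≤ f t := by
        filter_upwards [Ioo_mem_nhdsLT_of_mem (Set.right_mem_Ioc.mpr hpos)]
          with t ht
        by_contra hc
        push_neg at hc
        exact absurd (csInf_le ⟨0, fun u hu => hu.1⟩ (show t ∈ S from ⟨ht.1.le, hc.le⟩)) (not_le.mpr ht.2)
      linarith [ge_of_tendsto hl hev]
  linarith
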